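/- In a DAG G over X = O ∪ L ∪ S, for distinct observables O_i, O_j ∈ O the following are equivalent: (1) there is an inducing path between O_i and O_j with respect to L and S; (2) O_i and O_j are d-connected given W ∪ S for every W ⊆ O \ {O_i, O_j}. -/

import Mathlib

variable {V : Type*}

/-- `Ancestor E x y`: there is a (possibly trivial) directed path from `x` to `y`. -/
def Ancestor (E : V → V → Prop) (x y : V) : Prop :=
  Relation.ReflTransGen E x y

/-- A directed graph is acyclic (a DAG) if it has no directed cycles. -/
def Acyclic (E : V → V → Prop) : Prop :=
  ∀ v : V, ¬ Relation.TransGen E v v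

/-- `v` is a collider on the path (vertex list) `l`. -/
def ColliderOn (E : V → V → Prop) (l : List V) (v : V) : Prop :=
  ∃ x y : V, [x, v, y] <:+: l ∧ E x v ∧ E y v

/-- `v` is an interior non-collider on the path `l`. -/
def NonColliderOn (E : V → V → Prop) (l : List V) (v : V) : Prop :=
  (∃ x y : V, [x, v, y] <:+: l) ∧ ¬ ColliderOn E l v

/-- `l` is a path between `a` and `b` that is active given the conditioning set `C`:
every collider on `l` has a descendant in `C` and no non-collider on `l` is in `C`. -/
def ActivePath (E : V → V → Prop) (C : Set V) (a b : V) (l : List V) : Prop :=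
  l.head? = some a ∧ l.getLast? = some b ∧ l.Nodup ∧
  l.Chain' (fun u v => E u v ∨ E v u) ∧
  (∀ v, ColliderOn E l v → ∃ d ∈ C, Ancestor E v d) ∧
  (∀ v, NonColliderOn E l v → v ∉ C)

/-- `a` and `b` are d-connected given `C`. -/
def DConn (E : V → V → Prop) (C : Set V) (a b : V) : Prop :=
  ∃ l : List V, ActivePath E C a b l

/-- `a` and `b` are d-separated given `C`. -/
def DSep (E : V → V → Prop) (C : Set V) (a b : V) : Prop :=
  ¬ DConn E C a b

/-- `l` is an inducing path between `a` and `b` with respect to `L` and `S`. -/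
def InducingPath (E : V → V → Prop) (L S : Set V) (a b : V) (l : List V) : Prop :=
  l.head? = some a ∧ l.getLast? = some b ∧ l.Nodup ∧
  l.Chain' (fun u v => E u v ∨ E v u) ∧
  (∀ v, ColliderOn E l v → Ancestor E v a ∨ Ancestor E v b ∨ ∃ s ∈ S, Ancestor E v s) ∧
  (∀ v, NonColliderOn E l v → v ∈ L)

/-! ### auxiliary development -/

section Aux

variable {E : V → V → Prop}

lemma acy_irrefl (h : Acyclic E) (v : V) : ¬ E v v :=
  fun hv => h v (Relation.TransGen.single hv)

lemma acy_anti (h : Acyclic E) {u v : V} (huv : E u v) : ¬ E v u :=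
  fun hvu => h u (Relation.TransGen.head huv (Relation.TransGen.single hvu))

lemma chain'_head_rtg {l : List V} (h : l.Chain' E) {a : V} (ha : l.head? = some a) :
    ∀ w ∈ l, Relation.ReflTransGen E a w := by
  induction l generalizing a with
  | nil => simp
  | cons x t ih =>
    simp only [List.head?_cons, Option.some.injEq] at ha
    intro w hw
    rcases List.mem_cons.1 hw with rfl | hw
    · rw [ha]
    · cases t with
      | nil => simp at hw
      | cons y t' =>
        have h1 : E x y := (List.isChain_cons_cons.1 h).1
        have h2 := ih (List.isChain_cons_cons.1 h).2 (a := y) (by simp) w hw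
        rw [← ha]
        exact (Relation.ReflTransGen.single h1).trans h2

lemma chain'_rtg {l : List V} (h : l.Chain' E) {a b : V} (ha : l.head? = some a)
    (hb : l.getLast? = some b) : Relation.ReflTransGen E a b :=
  by
  rcases List.getLast?_eq_some_iff.1 hb with ⟨l', rfl⟩
  exact chain'_head_rtg h ha b (by simp)

lemma rtg_list {v a : V} (h : Relation.ReflTransGen E v a) :
    ∃ D : List V, D.head? = some v ∧ D.getLast? = some a ∧ D.Chain' E := by
  induction h with
  | refl => exact ⟨[v], by simp [List.Chain']⟩
  | @tail b c _ hbc ih =>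
    rcases ih with ⟨D, hh, hl, hc⟩
    rcases List.getLast?_eq_some_iff.1 hl with ⟨D', rfl⟩
    refine ⟨(D' ++ [b]) ++ [c], ?_, by simp, ?_⟩
    · simp only [List.head?_append] at hh ⊢
      cases D' <;> simpa using hh
    · rw [List.Chain', List.isChain_append]
      exact ⟨hc, List.isChain_singleton c, by simpa using hbc⟩

end Aux

section Aux2

variable {E : V → V → Prop} {K : Set V}

lemma infix_append_split {s A B : List V} (h : s <:+: A ++ B) :
    s <:+: A ∨ s <:+: B ∨
      ∃ s₁ s₂, s = s₁ ++ s₂ ∧ s₁ ≠ [] ∧ s₂ ≠ [] ∧ s₁ <:+ A ∧ s₂ <+: B := by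
  rcases h with ⟨p, q, hpq⟩
  rw [List.append_assoc] at hpq
  rcases List.append_eq_append_iff.1 hpq with ⟨a', ha1, ha2⟩ | ⟨c', hc1, hc2⟩
  · rcases List.append_eq_append_iff.1 ha2 with ⟨a₂, h1, h2⟩ | ⟨c₂, h1, h2⟩
    · left
      exact ⟨p, a₂, by rw [ha1, h1, List.append_assoc]⟩
    · rcases eq_or_ne a' [] with rfl | hne1
      · right; left
        exact ⟨[], q, by simp only [List.nil_append] at h1 ⊢; rw [h2, ← h1]⟩
      rcases eq_or_ne c₂ [] with rfl | hne2
      · left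
        rw [List.append_nil] at h1
        exact ⟨p, [], by rw [ha1, h1]; simp⟩
      · right; right
        exact ⟨a', c₂, h1, hne1, hne2, ⟨p, ha1.symm⟩, ⟨q, h2.symm⟩⟩
  · right; left
    exact ⟨c', q, by rw [hc2, List.append_assoc]⟩

lemma infix3_split {x u y v : V} {A B : List V} (h : [x, u, y] <:+: A ++ v :: B) :
    [x, u, y] <:+: A ++ [v] ∨ [x, u, y] <:+: v :: B ∨
      (u = v ∧ A.getLast? = some x ∧ B.head? = some y) := by
  rcases infix_append_split h with hA | hB | ⟨s₁, s₂, hs, hne1, hne2, hsuf, hpre⟩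
  · exact Or.inl (hA.trans ⟨[], [v], by simp⟩)
  · exact Or.inr (Or.inl hB)
  · rcases hpre with ⟨t, ht⟩
    rcases hsuf with ⟨A₀, hA₀⟩
    rcases s₁ with _ | ⟨a1, _ | ⟨a2, _ | ⟨a3, s₁⟩⟩⟩
    · exact absurd rfl hne1
    · -- s₁ = [a1], s₂ = [u, y]
      simp only [List.cons_append, List.nil_append, List.cons.injEq] at hs
      obtain ⟨rfl, hs2⟩ := hs
      rw [← hs2] at ht
      simp only [List.cons_append, List.nil_append, List.cons.injEq] at ht
      right; right
      exact ⟨ht.1, by rw [← hA₀]; simp, by rw [← ht.2]; simp⟩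
    · -- s₁ = [a1, a2], s₂ = [y]
      simp only [List.cons_append, List.nil_append, List.cons.injEq] at hs
      obtain ⟨rfl, rfl, hs2⟩ := hs
      rw [← hs2] at ht
      simp only [List.cons_append, List.nil_append, List.cons.injEq] at ht
      left
      exact ⟨A₀, [], by rw [← hA₀, ht.1]; simp⟩
    · -- s₁ too long
      simp only [List.cons_append, List.nil_append, List.cons.injEq] at hs
      exact absurd (List.append_eq_nil_iff.mp hs.2.2.2.symm).2 hne2

/-- Following a walk forward from an edge `E p u`: either the whole rest is a directed
path, or we hit a collider reachable from `u`. -/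
lemma key_reversal : ∀ (m : List V) (p u : V), E p u →
    (u :: m).Chain' (fun s t => E s t ∨ E t s) →
    (p :: u :: m).Chain' E ∨
      ∃ x z y, Relation.ReflTransGen E u z ∧ [x, z, y] <:+: p :: u :: m ∧ E x z ∧ E y z := by
  intro m
  induction m with
  | nil =>
    intro p u hpu _
    exact Or.inl (by simp [hpu, List.Chain'])
  | cons w m' ih =>
    intro p u hpu hch
    have hadj : E u w ∨ E w u := (List.isChain_cons_cons.1 hch).1
    by_cases huw : E u w
    · rcases ih u w huw (List.isChain_cons_cons.1 hch).2 with hc | ⟨x, z, y, hrtg, hinf, hxz, hyz⟩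
      · exact Or.inl (List.isChain_cons_cons.1 (by exact hc) |> fun _ => List.isChain_cons_cons.2 ⟨hpu, hc⟩)
      · exact Or.inr ⟨x, z, y, (Relation.ReflTransGen.single huw).trans hrtg,
          hinf.trans ⟨[p], [], by simp⟩, hxz, hyz⟩
    · have hwu : E w u := hadj.resolve_left huw
      exact Or.inr ⟨p, u, w, Relation.ReflTransGen.refl, ⟨[], m', by simp⟩, hpu, hwu⟩

/-- Active walk (like `ActivePath` but without `Nodup`, with positional conditions). -/
def AW (E : V → V → Prop) (K : Set V) (a b : V) (l : List V) : Prop :=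
  l.head? = some a ∧ l.getLast? = some b ∧
  l.Chain' (fun u v => E u v ∨ E v u) ∧
  ∀ x v y, [x, v, y] <:+: l →
    (E x v ∧ E y v → ∃ d ∈ K, Ancestor E v d) ∧ (¬(E x v ∧ E y v) → v ∉ K)

lemma AW.reverse {a b : V} {l : List V} (h : AW E K a b l) : AW E K b a l.reverse := by
  obtain ⟨hh, hl, hc, ht⟩ := h
  refine ⟨by simpa using hl, by simpa using hh, ?_, ?_⟩
  · rw [List.Chain', List.isChain_reverse]
    exact hc.imp (fun s t hst => hst.symm)
  · intro x v y hinf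
    have : [y, v, x] <:+: l := by
      have := hinf.reverse
      simpa using this
    have := ht y v x this
    constructor
    · intro hcol; exact (this.1 ⟨hcol.2, hcol.1⟩)
    · intro hncol; exact this.2 (fun hc2 => hncol ⟨hc2.2, hc2.1⟩)

lemma not_nodup_decomp : ∀ {l : List V}, ¬ l.Nodup →
    ∃ (A : List V) (v : V) (B C : List V), l = A ++ v :: B ++ v :: C := by
  intro l
  induction l with
  | nil => simp
  | cons x t ih =>
    intro h
    rw [List.nodup_cons] at h
    push_neg at h
    by_cases hx : x ∈ t
    · rcases List.append_of_mem hx with ⟨B, C, rfl⟩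
      exact ⟨[], x, B, C, by simp⟩
    · rcases ih (h hx) with ⟨A, v, B, C, rfl⟩
      exact ⟨x :: A, v, B, C, by simp⟩

end Aux2

section Aux3

variable {E : V → V → Prop} {K : Set V}

lemma adj_of_triple {l : List V} (hc : l.Chain' (fun u v => E u v ∨ E v u)) {x u y : V}
    (h : [x, u, y] <:+: l) : (E x u ∨ E u x) ∧ (E u y ∨ E y u) := by
  have := hc.infix h
  rw [List.isChain_cons_cons] at this
  exact ⟨this.1, (List.isChain_cons_cons.1 this.2).1⟩

lemma AW_nodup_activePath {a b : V} {l : List V} (h : AW E K a b l) (hnd : l.Nodup) :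
    ActivePath E K a b l := by
  obtain ⟨hh, hl, hc, ht⟩ := h
  refine ⟨hh, hl, hnd, hc, ?_, ?_⟩
  · rintro v ⟨x, y, hinf, hxv, hyv⟩
    exact (ht x v y hinf).1 ⟨hxv, hyv⟩
  · rintro v ⟨⟨x, y, hinf⟩, hnc⟩
    exact (ht x v y hinf).2 (fun h2 => hnc ⟨x, y, hinf, h2.1, h2.2⟩)

lemma AW_to_path (hacyc : Acyclic E) :
    ∀ (n : ℕ) (l : List V) {a b : V}, l.length ≤ n → AW E K a b l →
      ∃ m, ActivePath E K a b m := by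
  intro n
  induction n with
  | zero =>
    intro l a b hlen h
    rw [Nat.le_zero, List.length_eq_zero_iff] at hlen
    subst hlen
    simp [AW] at h
  | succ n ih =>
    intro l a b hlen h
    by_cases hnd : l.Nodup
    · exact ⟨l, AW_nodup_activePath h hnd⟩
    rcases not_nodup_decomp hnd with ⟨A, v, B, C, rfl⟩
    obtain ⟨hh, hl, hc, ht⟩ := h
    have hlform : A ++ v :: B ++ v :: C = A ++ v :: (B ++ v :: C) := by simp
    rw [hlform] at hh hl hc ht hlen
    -- the spliced shorter walk
    refine ih (A ++ v :: C) ?_ ⟨?_, ?_, ?_, ?_⟩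
    · simp only [List.length_append, List.length_cons] at hlen ⊢
      omega
    · rw [List.head?_append] at hh ⊢
      simpa using hh
    · rw [show A ++ v :: (B ++ v :: C) = (A ++ v :: B) ++ v :: C by simp] at hl
      rw [List.getLast?_append] at hl ⊢
      simpa using hl
    · rw [List.Chain', List.isChain_append] at hc ⊢
      refine ⟨hc.1, ?_, ?_⟩
      · have h2 := hc.2.1
        rw [show v :: (B ++ v :: C) = (v :: B) ++ v :: C by simp, List.isChain_append] at h2
        exact h2.2.1
      · simpa using hc.2.2
    intro x u y hinf
    rcases infix3_split hinf with h1 | h2 | ⟨huv, hAx, hCy⟩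
    · exact ht x u y (h1.trans ⟨[], B ++ v :: C, by simp⟩)
    · exact ht x u y (h2.trans ⟨A ++ v :: B, [], by simp⟩)
    -- junction case
    subst huv
    rcases List.getLast?_eq_some_iff.1 hAx with ⟨A₀, rfl⟩
    rcases C with _ | ⟨y', C₀⟩
    · simp at hCy
    obtain rfl : y = y' := by simpa [eq_comm] using hCy
    rcases B with _ | ⟨w, B₂⟩
    · -- adjacent repetition u, u: contradicts acyclicity
      exfalso
      have hTuu : [x, u, u] <:+: (A₀ ++ [x]) ++ u :: ([] ++ u :: (y :: C₀)) :=
        ⟨A₀, y :: C₀, by simp⟩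
      have := (adj_of_triple hc hTuu).2
      exact acy_irrefl hacyc u (this.elim id id)
    -- triple at the first occurrence of u
    have hT1 : [x, u, w] <:+: (A₀ ++ [x]) ++ u :: ((w :: B₂) ++ u :: (y :: C₀)) :=
      ⟨A₀, B₂ ++ u :: (y :: C₀), by simp⟩
    -- triple at the second occurrence of u
    rcases (w :: B₂).eq_nil_or_concat' with hbad | ⟨P₁, p, hP⟩
    · simp at hbad
    have hT2 : [p, u, y] <:+: (A₀ ++ [x]) ++ u :: ((w :: B₂) ++ u :: (y :: C₀)) := by
      refine ⟨A₀ ++ [x, u] ++ P₁, C₀, ?_⟩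
      rw [hP]
      simp
    have hvw_adj := (adj_of_triple hc hT1).2
    have hvy_adj := (adj_of_triple hc hT2).2
    constructor
    · -- collider case for the junction triple
      rintro ⟨hxv, hyv⟩
      by_cases hwv : E w u
      · exact (ht x u w hT1).1 ⟨hxv, hwv⟩
      · have hvw : E u w := hvw_adj.resolve_right hwv
        have hchainseg : (w :: (B₂ ++ [u])).Chain' (fun s t => E s t ∨ E t s) :=
          hc.infix ⟨A₀ ++ [x, u], y :: C₀, by simp⟩
        rcases key_reversal (B₂ ++ [u]) u w hvw hchainseg with
          hdir | ⟨x', z, y'', hrtg, hinf2, hx'z, hy''z⟩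
        · -- directed cycle: contradiction with acyclicity
          exfalso
          have hrtg2 : Relation.ReflTransGen E w u :=
            chain'_rtg (List.isChain_cons_cons.1 hdir).2 (by simp)
              (by rw [show w :: (B₂ ++ [u]) = (w :: B₂) ++ [u] by simp, List.getLast?_concat])
          exact hacyc u (Relation.TransGen.head' hvw hrtg2)
        · -- found a collider z with u ⟶* z
          have hinf3 : [x', z, y''] <:+:
              (A₀ ++ [x]) ++ u :: ((w :: B₂) ++ u :: (y :: C₀)) := by
            refine hinf2.trans ⟨A₀ ++ [x], y :: C₀, by simp⟩
          rcases (ht x' z y'' hinf3).1 ⟨hx'z, hy''z⟩ with ⟨d, hd, hzd⟩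
          exact ⟨d, hd, ((Relation.ReflTransGen.single hvw).trans hrtg).trans hzd⟩
    · -- non-collider case for the junction triple
      intro hncol
      by_cases hxv : E x u
      · have hyv : ¬ E y u := fun h2 => hncol ⟨hxv, h2⟩
        have hvy : E u y := hvy_adj.resolve_right hyv
        exact (ht p u y hT2).2 (fun h2 => (acy_anti hacyc hvy) h2.2)
      · exact (ht x u w hT1).2 (fun h2 => hxv h2.1)
end Aux3

section Aux4

variable {E : V → V → Prop} {K : Set V}

lemma AW_glue (hacyc : Acyclic E) {a v b : V} {R' M : List V}
    (hR : AW E K a v (R' ++ [v])) (hM : AW E K v b M)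
    (hcompat : R' = [] ∨ ∃ r, R'.getLast? = some r ∧ E v r ∧ v ∉ K) :
    AW E K a b (R' ++ M) := by
  rcases hcompat with rfl | ⟨r, hr, hvr, hvK⟩
  · obtain rfl : a = v := by simpa using hR.1.symm
    simpa using hM
  obtain ⟨hh, hl, hc, ht⟩ := hR
  obtain ⟨hh2, hl2, hc2, ht2⟩ := hM
  rcases M with _ | ⟨v', M₀⟩
  · simp at hh2
  obtain rfl : v = v' := by simpa using hh2.symm
  have hR'ne : R' ≠ [] := by rintro rfl; simp at hr
  refine ⟨?_, ?_, ?_, ?_⟩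
  · rw [List.head?_append] at hh ⊢
    rcases R' with _ | ⟨r₀, R₀⟩
    · simp at hr
    · simpa using hh
  · rw [List.getLast?_append]
    simp [hl2]
  · rw [List.Chain', List.isChain_append] at hc ⊢
    exact ⟨hc.1, hc2, by simpa using hc.2.2⟩
  · intro x' u y' hinf
    rcases infix3_split hinf with h1 | h2 | ⟨rfl, hx', hy'⟩
    · exact ht x' u y' h1
    · exact ht2 x' u y' h2
    · obtain rfl : r = x' := by rw [hr] at hx'; simpa using hx'
      constructor
      · rintro ⟨hru, -⟩
        exact absurd hru (acy_anti hacyc hvr)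
      · intro _; exact hvK

lemma AW_glueR (hacyc : Acyclic E) {a v b : V} {M Rb' : List V}
    (hM : AW E K a v M) (hR : AW E K v b (v :: Rb'))
    (hcompat : Rb' = [] ∨ ∃ r, Rb'.head? = some r ∧ E v r ∧ v ∉ K) :
    ∃ m, AW E K a b m := by
  have h2 : AW E K b v (Rb'.reverse ++ [v]) := by
    have := hR.reverse
    simpa using this
  have h3 : AW E K b a (Rb'.reverse ++ M.reverse) := by
    refine AW_glue hacyc h2 hM.reverse ?_
    rcases hcompat with rfl | ⟨r, hr, hvr, hvK⟩
    · exact Or.inl rfl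
    · exact Or.inr ⟨r, by simpa using hr, hvr, hvK⟩
  exact ⟨_, h3.reverse⟩

lemma dirpath_AW (hacyc : Acyclic E) {u t : V} (h : Relation.ReflTransGen E u t)
    (hK : ∀ d ∈ K, ¬ Relation.ReflTransGen E u d) :
    ∃ D₀ : List V, AW E K u t (u :: D₀) ∧
      (D₀ = [] ∨ ∃ r, D₀.head? = some r ∧ E u r ∧ u ∉ K) := by
  obtain ⟨D, hh, hl, hchain⟩ := rtg_list h
  rcases D with _ | ⟨u', D₀⟩
  · simp at hh
  obtain rfl : u = u' := by simpa using hh.symm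
  refine ⟨D₀, ⟨by simp, hl, hchain.imp (fun s t h => Or.inl h), ?_⟩, ?_⟩
  · intro x z y hinf
    have hch3 := hchain.infix hinf
    rw [List.isChain_cons_cons] at hch3
    have hxz : E x z := hch3.1
    have hzy : E z y := (List.isChain_cons_cons.1 hch3.2).1
    have hzK : z ∉ K := by
      intro hzK
      exact hK z hzK (chain'_head_rtg hchain (by simp) z (hinf.subset (by simp)))
    exact ⟨fun h2 => absurd h2.2 (acy_anti hacyc hzy), fun _ => hzK⟩
  · rcases D₀ with _ | ⟨r, D₁⟩
    · exact Or.inl rfl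
    · refine Or.inr ⟨r, by simp, (List.isChain_cons_cons.1 hchain).1, ?_⟩
      intro huK
      exact hK u huK Relation.ReflTransGen.refl

lemma dirpath_AW_rev (hacyc : Acyclic E) {u t : V} (h : Relation.ReflTransGen E u t)
    (hK : ∀ d ∈ K, ¬ Relation.ReflTransGen E u d) :
    ∃ R' : List V, AW E K t u (R' ++ [u]) ∧
      (R' = [] ∨ ∃ r, R'.getLast? = some r ∧ E u r ∧ u ∉ K) := by
  obtain ⟨D₀, hAW, hC⟩ := dirpath_AW hacyc h hK
  refine ⟨D₀.reverse, by simpa using hAW.reverse, ?_⟩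
  rcases hC with rfl | ⟨r, hr, hur, huK⟩
  · exact Or.inl rfl
  · exact Or.inr ⟨r, by simpa using hr, hur, huK⟩

lemma surgery (hacyc : Acyclic E) {a b : V} :
    ∀ (n : ℕ) (l : List V) (v w : V) (Ra' Rb' : List V),
      l.length ≤ n → l.head? = some v → l.getLast? = some w →
      l.Chain' (fun s t => E s t ∨ E t s) →
      (∀ x u y, [x, u, y] <:+: l →
        (¬(E x u ∧ E y u) → u ∉ K) ∧
        (E x u ∧ E y u → (∃ d ∈ K, Relation.ReflTransGen E u d) ∨
          ((Relation.ReflTransGen E u a ∨ Relation.ReflTransGen E u b) ∧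
            ∀ d ∈ K, ¬ Relation.ReflTransGen E u d))) →
      AW E K a v (Ra' ++ [v]) →
      (Ra' = [] ∨ ∃ r, Ra'.getLast? = some r ∧ E v r ∧ v ∉ K) →
      AW E K w b (w :: Rb') →
      (Rb' = [] ∨ ∃ r, Rb'.head? = some r ∧ E w r ∧ w ∉ K) →
      ∃ m, AW E K a b m := by
  intro n
  induction n with
  | zero =>
    intro l v w _ _ hlen hh _ _ _ _ _ _ _
    rw [Nat.le_zero, List.length_eq_zero_iff] at hlen
    subst hlen; simp at hh
  | succ n ih =>
    intro l v w Ra' Rb' hlen hh hl hc ht hRa hRaC hRb hRbC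
    by_cases hbad : ∀ x u y, [x, u, y] <:+: l → E x u ∧ E y u →
        ∃ d ∈ K, Relation.ReflTransGen E u d
    · -- no bad collider: glue everything
      have hAWl : AW E K v w l :=
        ⟨hh, hl, hc, fun x u y hinf => ⟨hbad x u y hinf, (ht x u y hinf).1⟩⟩
      exact AW_glueR hacyc (AW_glue hacyc hRa hAWl hRaC) hRb hRbC
    · push_neg at hbad
      obtain ⟨x, u, y, hinf, hcol, hnogood⟩ := hbad
      rcases (ht x u y hinf).2 hcol with hgood | ⟨hanc, hnodesc⟩
      · exact absurd hgood (by simpa using hnogood)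
      obtain ⟨s, t, hst⟩ := hinf
      rcases hanc with hanca | hancb
      · -- u is an ancestor of a : reroute the left part
        obtain ⟨R2', hAW2, hC2⟩ := dirpath_AW_rev hacyc hanca hnodesc
        have hsuf : (u :: y :: t) <:+: l := ⟨s ++ [x], [], by rw [← hst]; simp⟩
        refine ih (u :: y :: t) u w R2' Rb' ?_ (by simp) ?_ (hc.infix hsuf) ?_ hAW2 hC2 hRb hRbC
        · have := congrArg List.length hst
          simp only [List.length_append, List.length_cons] at this ⊢
          omega
        · rw [← hl, ← hst]
          rw [show s ++ [x, u, y] ++ t = (s ++ [x]) ++ (u :: y :: t) by simp,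
            List.getLast?_append]
          obtain ⟨c, hcs⟩ : ∃ c, (u :: y :: t).getLast? = some c :=
            Option.isSome_iff_exists.mp (by rw [List.getLast?_isSome]; simp)
          rw [hcs]
          rfl
        · intro x' u' y' hinf'
          exact ht x' u' y' (hinf'.trans hsuf)
      · -- u is an ancestor of b : reroute the right part
        obtain ⟨R2', hAW2, hC2⟩ := dirpath_AW hacyc hancb hnodesc
        have hpre : (s ++ [x, u]) <:+: l := ⟨[], y :: t, by rw [← hst]; simp⟩
        refine ih (s ++ [x, u]) v u Ra' R2' ?_ ?_ ?_ (hc.infix hpre) ?_ hRa hRaC hAW2 hC2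
        · have := congrArg List.length hst
          simp only [List.length_append, List.length_cons] at this ⊢
          omega
        · rw [← hh, ← hst]
          rw [show s ++ [x, u, y] ++ t = (s ++ [x, u]) ++ (y :: t) by simp,
            List.head?_append]
          rcases s with _ | ⟨s₀, s₁⟩ <;> simp
        · rw [show s ++ [x, u] = (s ++ [x]) ++ [u] by simp, List.getLast?_concat]
        · intro x' u' y' hinf'
          exact ht x' u' y' (hinf'.trans hpre)

end Aux4

section Aux5

variable {E : V → V → Prop}

lemma triple_eq_of_nodup {l : List V} (hnd : l.Nodup) {x u y x' y' : V}
    (h1 : [x, u, y] <:+: l) (h2 : [x', u, y'] <:+: l) : x = x' ∧ y = y' := by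
  obtain ⟨s, t, hst⟩ := h1
  obtain ⟨s', t', hst'⟩ := h2
  have key : ∀ (s t : List V), s ++ [x, u, y] ++ t = l → ∀ (x₀ y₀ : V),
      l[s.length + 1]? = some u := by
    intro s t h x₀ y₀
    rw [← h, List.getElem?_append_left (by simp),
      List.getElem?_append_right (by simp)]
    simp
  have k1 := key s t hst x y
  have k2 : l[s'.length + 1]? = some u := by
    rw [← hst', List.getElem?_append_left (by simp),
      List.getElem?_append_right (by simp)]
    simp
  have hlen : s.length = s'.length := by
    have h1' : s.length + 1 < l.length := by
      rw [← hst]; simp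
    have h2' : s'.length + 1 < l.length := by
      rw [← hst']; simp
    have e1 : l[s.length + 1]'h1' = u := by
      have := k1; rwa [List.getElem?_eq_getElem h1', Option.some.injEq] at this
    have e2 : l[s'.length + 1]'h2' = u := by
      have := k2; rwa [List.getElem?_eq_getElem h2', Option.some.injEq] at this
    have := List.Nodup.getElem_inj_iff hnd (hi := h1') (hj := h2') |>.1 (by rw [e1, e2])
    omega
  have := hst.trans hst'.symm
  rw [List.append_assoc, List.append_assoc] at this
  obtain ⟨-, h2⟩ := List.append_inj this hlen
  simp only [List.cons_append, List.cons.injEq] at h2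
  exact ⟨h2.1, h2.2.2.1⟩

lemma triple_ne_head {l : List V} (hnd : l.Nodup) {a : V} (hh : l.head? = some a)
    {x u y : V} (h : [x, u, y] <:+: l) : u ≠ a := by
  obtain ⟨s, t, hst⟩ := h
  rcases s with _ | ⟨s₀, s₁⟩
  · simp only [List.nil_append] at hst
    rw [← hst] at hh hnd
    obtain rfl : x = a := by simpa using hh
    rintro rfl
    simp at hnd
  · rw [← hst] at hh hnd
    obtain rfl : s₀ = a := by simpa using hh
    rintro rfl
    simp only [List.cons_append, List.nodup_cons] at hnd
    exact hnd.1 (by simp)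

lemma triple_ne_last {l : List V} (hnd : l.Nodup) {b : V} (hl : l.getLast? = some b)
    {x u y : V} (h : [x, u, y] <:+: l) : u ≠ b := by
  have hrev : [y, u, x] <:+: l.reverse := by
    have := h.reverse
    simpa using this
  exact triple_ne_head (List.nodup_reverse.2 hnd) (by simpa using hl) hrev

lemma forward_reach {l : List V} (hc : l.Chain' (fun s t => E s t ∨ E t s)) {b : V}
    (hl : l.getLast? = some b) {x v y : V} (h3 : [x, v, y] <:+: l) (hvy : E v y) :
    Relation.ReflTransGen E v b ∨
      ∃ p z q, Relation.ReflTransGen E v z ∧ [p, z, q] <:+: l ∧ E p z ∧ E q z := by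
  obtain ⟨s, t, hst⟩ := h3
  have hsuf : (v :: y :: t) <:+: l := ⟨s ++ [x], [], by rw [← hst]; simp⟩
  have hchyt : (y :: t).Chain' (fun s t => E s t ∨ E t s) :=
    hc.infix (⟨s ++ [x, v], [], by rw [← hst]; simp⟩ : (y :: t) <:+: l)
  rcases key_reversal t v y hvy hchyt with hdir | ⟨p, z, q, hrtg, hinf, hpz, hqz⟩
  · left
    have hlast : (v :: y :: t).getLast? = some b := by
      rw [← hl, ← hst, show s ++ [x, v, y] ++ t = (s ++ [x]) ++ (v :: y :: t) by simp,
        List.getLast?_append]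
      obtain ⟨c, hcs⟩ : ∃ c, (v :: y :: t).getLast? = some c :=
        Option.isSome_iff_exists.mp (by rw [List.getLast?_isSome]; simp)
      rw [hcs]; rfl
    exact chain'_rtg hdir (by simp) hlast
  · exact Or.inr ⟨p, z, q, (Relation.ReflTransGen.single hvy).trans hrtg,
      hinf.trans hsuf, hpz, hqz⟩

end Aux5

/-- There is an inducing path between `O_i` and `O_j` w.r.t. `L` and `S` iff `O_i` and `O_j`
are d-connected given `W ∪ S` for every `W ⊆ O \ {O_i, O_j}`. -/
theorem stmt_4 (E : V → V → Prop) (hacyc : Acyclic E) (O L S : Set V)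
    (hcov : ∀ v : V, v ∈ O ∪ L ∪ S)
    (hOL : Disjoint O L) (hOS : Disjoint O S) (hLS : Disjoint L S)
    (Oi Oj : V) (hOi : Oi ∈ O) (hOj : Oj ∈ O) (hne : Oi ≠ Oj) :
    (∃ l : List V, InducingPath E L S Oi Oj l) ↔
      (∀ W : Set V, W ⊆ O \ {Oi, Oj} → DConn E (W ∪ S) Oi Oj) := by
  constructor
  · -- inducing path ⇒ d-connected given every W ∪ S
    rintro ⟨l, hh, hl, hnd, hc, hcolliders, hnoncol⟩ W hW
    set K : Set V := W ∪ S with hK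
    have hsing : ∀ c : V, AW E K c c [c] := by
      intro c
      refine ⟨by simp, by simp, by simp [List.Chain'], ?_⟩
      intro x u y hinf
      exact absurd hinf.length_le (by simp)
    have htrip : ∀ x u y, [x, u, y] <:+: l →
        (¬(E x u ∧ E y u) → u ∉ K) ∧
        (E x u ∧ E y u → (∃ d ∈ K, Relation.ReflTransGen E u d) ∨
          ((Relation.ReflTransGen E u Oi ∨ Relation.ReflTransGen E u Oj) ∧
            ∀ d ∈ K, ¬ Relation.ReflTransGen E u d)) := by
      intro x u y hinf
      constructor
      · intro hncol
        have huL : u ∈ L := by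
          refine hnoncol u ⟨⟨x, y, hinf⟩, ?_⟩
          rintro ⟨x', y', hinf', hx', hy'⟩
          obtain ⟨rfl, rfl⟩ := triple_eq_of_nodup hnd hinf' hinf
          exact hncol ⟨hx', hy'⟩
        rintro (huW | huS)
        · exact Set.disjoint_left.1 hOL ((hW huW).1) huL
        · exact Set.disjoint_left.1 hLS huL huS
      · intro hcol
        have := hcolliders u ⟨x, y, hinf, hcol.1, hcol.2⟩
        by_cases hgood : ∃ d ∈ K, Relation.ReflTransGen E u d
        · exact Or.inl hgood
        push_neg at hgood
        rcases this with h1 | h2 | ⟨s, hsS, hs⟩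
        · exact Or.inr ⟨Or.inl h1, hgood⟩
        · exact Or.inr ⟨Or.inr h2, hgood⟩
        · exact absurd hs (hgood s (Or.inr hsS))
    obtain ⟨m, hm⟩ := surgery hacyc l.length l Oi Oj [] [] le_rfl hh hl hc htrip
      (by simpa using hsing Oi) (Or.inl rfl) (by simpa using hsing Oj) (Or.inl rfl)
    exact AW_to_path hacyc m.length m le_rfl hm
  · -- d-connected given every W ∪ S ⇒ inducing path
    intro h
    set W₀ : Set V := {o | o ∈ O ∧ o ≠ Oi ∧ o ≠ Oj ∧
      (Ancestor E o Oi ∨ Ancestor E o Oj ∨ ∃ s ∈ S, Ancestor E o s)} with hW₀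
    have hsub : W₀ ⊆ O \ {Oi, Oj} := by
      rintro o ⟨hoO, h1, h2, -⟩
      exact ⟨hoO, by simp [h1, h2]⟩
    obtain ⟨l, hh, hl, hnd, hc, hcol, hnon⟩ := h W₀ hsub
    refine ⟨l, hh, hl, hnd, hc, ?_, ?_⟩
    · intro v hv
      rcases hcol v hv with ⟨d, hd, hvd⟩
      rcases hd with hdW | hdS
      · rcases hdW.2.2.2 with h1 | h1 | ⟨s, hsS, h1⟩
        · exact Or.inl (hvd.trans h1)
        · exact Or.inr (Or.inl (hvd.trans h1))
        · exact Or.inr (Or.inr ⟨s, hsS, hvd.trans h1⟩)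
      · exact Or.inr (Or.inr ⟨d, hdS, hvd⟩)
    · intro v hv
      have hvnK : v ∉ W₀ ∪ S := hnon v hv
      obtain ⟨⟨x, y, hinf⟩, hncol⟩ := hv
      rcases hcov v with (hvO | hvL) | hvS
      swap
      · exact hvL
      swap
      · exact absurd (Or.inr hvS) hvnK
      exfalso
      have hne1 : v ≠ Oi := triple_ne_head hnd hh hinf
      have hne2 : v ≠ Oj := triple_ne_last hnd hl hinf
      have hkey : ¬ (Ancestor E v Oi ∨ Ancestor E v Oj ∨ ∃ s ∈ S, Ancestor E v s) := by
        intro hanc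
        exact hvnK (Or.inl ⟨hvO, hne1, hne2, hanc⟩)
      -- from a collider reachable from v we also get a contradiction
      have hfromcol : ∀ z, Relation.ReflTransGen E v z → ColliderOn E l z → False := by
        intro z hvz hzcol
        rcases hcol z hzcol with ⟨d, hd, hzd⟩
        rcases hd with hdW | hdS
        · rcases hdW.2.2.2 with h1 | h1 | ⟨s, hsS, h1⟩
          · exact hkey (Or.inl ((hvz.trans hzd).trans h1))
          · exact hkey (Or.inr (Or.inl ((hvz.trans hzd).trans h1)))
          · exact hkey (Or.inr (Or.inr ⟨s, hsS, (hvz.trans hzd).trans h1⟩))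
        · exact hkey (Or.inr (Or.inr ⟨d, hdS, hvz.trans hzd⟩))
      have hadj := adj_of_triple hc hinf
      have hnc2 : ¬ (E x v ∧ E y v) := fun h2 => hncol ⟨x, y, hinf, h2.1, h2.2⟩
      by_cases hvy : E v y
      · rcases forward_reach hc hl hinf hvy with h1 | ⟨p, z, q, hvz, hinf2, hpz, hqz⟩
        · exact hkey (Or.inr (Or.inl h1))
        · exact hfromcol z hvz ⟨p, q, hinf2, hpz, hqz⟩
      · have hyv : E y v := hadj.2.resolve_left hvy
        have hvx : E v x := by
          rcases hadj.1 with h1 | h1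
          · exact absurd ⟨h1, hyv⟩ hnc2
          · exact h1
        have hcrev : l.reverse.Chain' (fun s t => E s t ∨ E t s) := by
          rw [List.Chain', List.isChain_reverse]
          exact hc.imp (fun s t hst => hst.symm)
        have hinfrev : [y, v, x] <:+: l.reverse := by
          have := hinf.reverse
          simpa using this
        rcases forward_reach hcrev (by simpa using hh) hinfrev hvx with
          h1 | ⟨p, z, q, hvz, hinf2, hpz, hqz⟩
        · exact hkey (Or.inl h1)
        · have hinf3 : [q, z, p] <:+: l := by
            have := hinf2.reverse
            simpa using this
          exact hfromcol z hvz ⟨q, p, hinf3, hqz, hpz⟩
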